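/- Let M be a uniform random element of M_{n,d}, fix distinct i₁, i₂ ∈ [n], and let Fix ⊆ [n] be a (possibly random) set of column indices that is a function of the rows (R_i)_{i ∉ {i₁,i₂}} of M. Set A₁ = Ex_M(i₁,i₂) \ Fix and A₂ = Ex_M(i₂,i₁) \ Fix, and fix s with s ≤ min(|A₁|, |A₂|). Conditional on M, let S₁ ⊆ A₁ and S₂ ⊆ A₂ be chosen independently and uniformly at random among subsets of size s; conditional on M, S₁, S₂, let π : S₁ → S₂ be a uniform random bijection; and let ξ : [n] → {±1} be iid uniform signs independent of all other variables. Form M̃ from M by replacing, for each j ∈ S₁, the 2×2 minor of M with rows (i₁,i₂) and columns (j, π(j)) by I = [[1,0],[0,1]] if ξ(j) = +1 and by J = [[0,1],[1,0]] if ξ(j) = −1, leaving all other entries unchanged. Then M̃ has the same distribution as M. -/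

import Mathlib

open scoped Classical

noncomputable section

/-- `M_{n,d}`: 0/1 matrices all of whose row and column sums equal `d`. -/
def regSet (n d : ℕ) : Finset (Matrix (Fin n) (Fin n) Bool) :=
  Finset.univ.filter fun A =>
    (∀ i, (Finset.univ.filter fun j => A i j = true).card = d) ∧
    (∀ j, (Finset.univ.filter fun i => A i j = true).card = d)

/-- `Ex_M(i₁,i₂) = N_M(i₁) \ N_M(i₂)`. -/
def exSet {n : ℕ} (M : Matrix (Fin n) (Fin n) Bool) (i₁ i₂ : Fin n) : Finset (Fin n) :=
  Finset.univ.filter fun j => M i₁ j = true ∧ M i₂ j = false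

/-- The matrix obtained from `M` by switching, for each `j ∈ T`, the `2 × 2` minor at
rows `(i₁,i₂)` and columns `(j, σ j)`: it is set to `I = [[1,0],[0,1]]` if `ξ j = true`
(sign `+1`) and to `J = [[0,1],[1,0]]` if `ξ j = false` (sign `-1`). -/
def shuffleAt {n : ℕ} (M : Matrix (Fin n) (Fin n) Bool) (i₁ i₂ : Fin n)
    (T : Finset (Fin n)) (σ : Equiv.Perm (Fin n)) (ξ : Fin n → Bool) :
    Matrix (Fin n) (Fin n) Bool :=
  Matrix.of fun i j =>
    if i = i₁ then
      if j ∈ T then ξ j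
      else if σ⁻¹ j ∈ T then !(ξ (σ⁻¹ j))
      else M i j
    else if i = i₂ then
      if j ∈ T then !(ξ j)
      else if σ⁻¹ j ∈ T then ξ (σ⁻¹ j)
      else M i j
    else M i j

/-- Uniform distribution on a finite set, with a default value when it is empty. -/
def uniformOn {α : Type*} (s : Finset α) (a₀ : α) : PMF α :=
  if h : s.Nonempty then PMF.uniformOfFinset s h else PMF.pure a₀

variable {n : ℕ}

def cfun (T : Finset (Fin n)) (σ : Equiv.Perm (Fin n)) (ξ : Fin n → Bool) (k : Fin n) : Fin n :=
  if k ∈ T ∧ ξ k = false then σ k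
  else if σ⁻¹ k ∈ T ∧ ξ (σ⁻¹ k) = false then σ⁻¹ k else k

section CF
variable {T : Finset (Fin n)} {σ : Equiv.Perm (Fin n)} {ξ : Fin n → Bool}

lemma noimg (hdisj : ∀ j ∈ T, σ j ∉ T) {j : Fin n} (hj : j ∈ T) : σ⁻¹ j ∉ T := by
  intro h; exact hdisj _ h (by simpa using hj)

lemma cfun_mem_false {j : Fin n} (hj : j ∈ T) (hξ : ξ j = false) : cfun T σ ξ j = σ j :=
  if_pos ⟨hj, hξ⟩

lemma cfun_mem_true (hdisj : ∀ j ∈ T, σ j ∉ T) {j : Fin n} (hj : j ∈ T) (hξ : ξ j = true) : cfun T σ ξ j = j := by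
  unfold cfun
  rw [if_neg (by simp [hξ]), if_neg (by intro h; exact noimg hdisj hj h.1)]

lemma cfun_img_false (hdisj : ∀ j ∈ T, σ j ∉ T) {j : Fin n} (hj : j ∈ T) (hξ : ξ j = false) : cfun T σ ξ (σ j) = j := by
  unfold cfun
  rw [if_neg (by intro h; exact hdisj _ hj h.1)]
  rw [if_pos (by simpa using ⟨hj, hξ⟩)]
  simp

lemma cfun_img_true (hdisj : ∀ j ∈ T, σ j ∉ T) {j : Fin n} (hj : j ∈ T) (hξ : ξ j = true) : cfun T σ ξ (σ j) = σ j := by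
  unfold cfun
  rw [if_neg (by intro h; exact hdisj _ hj h.1), if_neg (by simp [hξ])]

lemma cfun_not_mem {j : Fin n} (hj : j ∉ T) (hj' : σ⁻¹ j ∉ T) : cfun T σ ξ j = j := by
  unfold cfun
  rw [if_neg (by tauto), if_neg (by tauto)]

lemma cfun_invol (hdisj : ∀ j ∈ T, σ j ∉ T) : Function.Involutive (cfun T σ ξ) := by
  intro j
  by_cases hj : j ∈ T
  · cases hξ : ξ j
    · rw [cfun_mem_false hj hξ, cfun_img_false hdisj hj hξ]
    · rw [cfun_mem_true hdisj hj hξ, cfun_mem_true hdisj hj hξ]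
  · by_cases hj2 : σ⁻¹ j ∈ T
    · cases hξ2 : ξ (σ⁻¹ j)
      · have h1 : cfun T σ ξ j = σ⁻¹ j := by
          unfold cfun; rw [if_neg (by tauto), if_pos ⟨hj2, hξ2⟩]
        rw [h1, cfun_mem_false hj2 hξ2]; simp
      · have h1 : cfun T σ ξ j = j := by
          unfold cfun; rw [if_neg (by tauto), if_neg (by rw [hξ2]; simp)]
        rw [h1, h1]
    · rw [cfun_not_mem hj hj2, cfun_not_mem hj hj2]

lemma cfun_moves (hdisj : ∀ j ∈ T, σ j ∉ T) {j : Fin n} (h : cfun T σ ξ j ≠ j) :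
    j ∈ T ∪ T.image σ ∧ cfun T σ ξ j ∈ T ∪ T.image σ := by
  unfold cfun at h ⊢
  split_ifs at h ⊢ with h1 h2
  · exact ⟨Finset.mem_union_left _ h1.1,
      Finset.mem_union_right _ (Finset.mem_image_of_mem _ h1.1)⟩
  · refine ⟨Finset.mem_union_right _ ?_, Finset.mem_union_left _ h2.1⟩
    exact Finset.mem_image.2 ⟨σ⁻¹ j, h2.1, by simp⟩
  · exact absurd rfl h

end CF

section SH
variable {M : Matrix (Fin n) (Fin n) Bool} {i₁ i₂ : Fin n}
variable {T₁ : Finset (Fin n)} {σ : Equiv.Perm (Fin n)} {ξ : Fin n → Bool}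

lemma disj_of_ex (hT1 : ∀ j ∈ T₁, M i₁ j = true ∧ M i₂ j = false)
    (hT2 : ∀ j ∈ T₁, M i₁ (σ j) = false ∧ M i₂ (σ j) = true) :
    ∀ j ∈ T₁, σ j ∉ T₁ := by
  intro j hj hs
  have := (hT1 _ hs).1
  rw [(hT2 _ hj).1] at this
  exact Bool.false_ne_true this

lemma shuffle_row1 (hT1 : ∀ j ∈ T₁, M i₁ j = true ∧ M i₂ j = false)
    (hT2 : ∀ j ∈ T₁, M i₁ (σ j) = false ∧ M i₂ (σ j) = true) (j : Fin n) :
    shuffleAt M i₁ i₂ T₁ σ ξ i₁ j = M i₁ (cfun T₁ σ ξ j) := by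
  have hdisj := disj_of_ex hT1 hT2
  simp only [shuffleAt, Matrix.of_apply, eq_self_iff_true, ite_true]
  by_cases hj : j ∈ T₁
  · rw [if_pos hj]
    cases hξ : ξ j
    · rw [cfun_mem_false hj hξ, (hT2 _ hj).1]
    · rw [cfun_mem_true hdisj hj hξ, (hT1 _ hj).1]
  · rw [if_neg hj]
    by_cases hj2 : σ⁻¹ j ∈ T₁
    · rw [if_pos hj2]
      cases hξ2 : ξ (σ⁻¹ j)
      · have h1 : cfun T₁ σ ξ j = σ⁻¹ j := by
          unfold cfun; rw [if_neg (by tauto), if_pos ⟨hj2, hξ2⟩]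
        rw [h1, (hT1 _ hj2).1]; rfl
      · have h1 : cfun T₁ σ ξ j = j := by
          unfold cfun; rw [if_neg (by tauto), if_neg (by rw [hξ2]; simp)]
        rw [h1]
        have := (hT2 _ hj2).1
        simpa using this
    · rw [if_neg hj2, cfun_not_mem hj hj2]

lemma shuffle_row2 (h12 : i₁ ≠ i₂) (hT1 : ∀ j ∈ T₁, M i₁ j = true ∧ M i₂ j = false)
    (hT2 : ∀ j ∈ T₁, M i₁ (σ j) = false ∧ M i₂ (σ j) = true) (j : Fin n) :
    shuffleAt M i₁ i₂ T₁ σ ξ i₂ j = M i₂ (cfun T₁ σ ξ j) := by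
  have hdisj := disj_of_ex hT1 hT2
  simp only [shuffleAt, Matrix.of_apply, if_neg (Ne.symm h12), eq_self_iff_true, ite_true]
  by_cases hj : j ∈ T₁
  · rw [if_pos hj]
    cases hξ : ξ j
    · rw [cfun_mem_false hj hξ, (hT2 _ hj).2]; rfl
    · rw [cfun_mem_true hdisj hj hξ, (hT1 _ hj).2]; rfl
  · rw [if_neg hj]
    by_cases hj2 : σ⁻¹ j ∈ T₁
    · rw [if_pos hj2]
      cases hξ2 : ξ (σ⁻¹ j)
      · have h1 : cfun T₁ σ ξ j = σ⁻¹ j := by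
          unfold cfun; rw [if_neg (by tauto), if_pos ⟨hj2, hξ2⟩]
        rw [h1, (hT1 _ hj2).2]
      · have h1 : cfun T₁ σ ξ j = j := by
          unfold cfun; rw [if_neg (by tauto), if_neg (by rw [hξ2]; simp)]
        rw [h1]
        have := (hT2 _ hj2).2
        simpa using this
    · rw [if_neg hj2, cfun_not_mem hj hj2]

lemma shuffle_row_other {i : Fin n} (h1 : i ≠ i₁) (h2 : i ≠ i₂) :
    shuffleAt M i₁ i₂ T₁ σ ξ i = M i := by
  funext j
  simp only [shuffleAt, Matrix.of_apply, if_neg h1, if_neg h2]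

end SH

lemma card_filter_comp {f g : Fin n → Bool} (e : Equiv.Perm (Fin n))
    (h : ∀ j, f j = g (e j)) :
    (Finset.univ.filter fun j => f j = true).card
      = (Finset.univ.filter fun j => g j = true).card := by
  apply Finset.card_bij (fun a _ => e a)
  · intro a ha
    simp only [Finset.mem_filter, Finset.mem_univ, true_and] at *
    rw [← h a]; exact ha
  · intro a _ b _ hab
    exact e.injective hab
  · intro b hb
    refine ⟨e.symm b, ?_, by simp⟩
    simp only [Finset.mem_filter, Finset.mem_univ, true_and] at *
    rw [h (e.symm b)]
    simpa using hb

lemma mem_image_invol {c : Fin n → Fin n} (hc : Function.Involutive c)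
    {s : Finset (Fin n)} {a : Fin n} : a ∈ s.image c ↔ c a ∈ s := by
  constructor
  · rintro h
    obtain ⟨b, hb, rfl⟩ := Finset.mem_image.1 h
    rwa [hc b]
  · intro h
    exact Finset.mem_image.2 ⟨c a, h, hc a⟩

section REG
variable {d : ℕ} {M : Matrix (Fin n) (Fin n) Bool} {i₁ i₂ : Fin n}
variable {T₁ : Finset (Fin n)} {σ : Equiv.Perm (Fin n)} {ξ : Fin n → Bool}

lemma pair_sum_eq_one (hT1 : ∀ j ∈ T₁, M i₁ j = true ∧ M i₂ j = false)
    (hT2 : ∀ j ∈ T₁, M i₁ (σ j) = false ∧ M i₂ (σ j) = true)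
    {k : Fin n} (hk : k ∈ T₁ ∪ T₁.image σ) :
    ((if M i₁ k = true then 1 else 0) + if M i₂ k = true then 1 else 0 : ℕ) = 1 := by
  rcases Finset.mem_union.1 hk with h | h
  · rw [(hT1 _ h).1, (hT1 _ h).2]; simp
  · obtain ⟨l, hl, rfl⟩ := Finset.mem_image.1 h
    rw [(hT2 _ hl).1, (hT2 _ hl).2]; simp

lemma shuffle_mem_regSet (h12 : i₁ ≠ i₂) (hM : M ∈ regSet n d)
    (hT1 : ∀ j ∈ T₁, M i₁ j = true ∧ M i₂ j = false)
    (hT2 : ∀ j ∈ T₁, M i₁ (σ j) = false ∧ M i₂ (σ j) = true) :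
    shuffleAt M i₁ i₂ T₁ σ ξ ∈ regSet n d := by
  have hdisj := disj_of_ex hT1 hT2
  have hinv := cfun_invol (ξ := ξ) hdisj
  rw [regSet, Finset.mem_filter] at hM ⊢
  obtain ⟨-, hrow, hcol⟩ := hM
  refine ⟨Finset.mem_univ _, ?_, ?_⟩
  · intro i
    by_cases e1 : i = i₁
    · subst e1
      rw [← hrow i]
      exact card_filter_comp (Function.Involutive.toPerm _ hinv)
        (fun j => shuffle_row1 hT1 hT2 j)
    · by_cases e2 : i = i₂
      · subst e2
        rw [← hrow i]
        exact card_filter_comp (Function.Involutive.toPerm _ hinv)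
          (fun j => shuffle_row2 h12 hT1 hT2 j)
      · have heq : (Finset.univ.filter fun j => shuffleAt M i₁ i₂ T₁ σ ξ i j = true)
            = Finset.univ.filter fun j => M i j = true := by
          ext j
          simp only [Finset.mem_filter, Finset.mem_univ, true_and, shuffle_row_other e1 e2]
        rw [heq]
        exact hrow i
  · intro j
    rw [Finset.card_filter]
    rw [← Finset.add_sum_erase _ _ (Finset.mem_univ i₁)]
    rw [← Finset.add_sum_erase _ _ (Finset.mem_erase.2 ⟨Ne.symm h12, Finset.mem_univ i₂⟩)]
    have hcolM := hcol j
    rw [Finset.card_filter] at hcolM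
    rw [← Finset.add_sum_erase _ _ (Finset.mem_univ i₁)] at hcolM
    rw [← Finset.add_sum_erase _ _
      (Finset.mem_erase.2 ⟨Ne.symm h12, Finset.mem_univ i₂⟩)] at hcolM
    have htail : ∀ i ∈ (Finset.univ.erase i₁).erase i₂,
        (if shuffleAt M i₁ i₂ T₁ σ ξ i j = true then 1 else 0)
          = (if M i j = true then 1 else 0 : ℕ) := by
      intro i hi
      have h2 := Finset.mem_erase.1 hi
      have h1 := Finset.mem_erase.1 h2.2
      rw [shuffle_row_other h1.1 h2.1]
    rw [Finset.sum_congr rfl htail]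
    have hhead : (if shuffleAt M i₁ i₂ T₁ σ ξ i₁ j = true then 1 else 0)
        + (if shuffleAt M i₁ i₂ T₁ σ ξ i₂ j = true then 1 else 0)
        = ((if M i₁ j = true then 1 else 0) + if M i₂ j = true then 1 else 0 : ℕ) := by
      rw [shuffle_row1 hT1 hT2, shuffle_row2 h12 hT1 hT2]
      by_cases hfix : cfun T₁ σ ξ j = j
      · rw [hfix]
      · have hmv := cfun_moves hdisj hfix
        rw [pair_sum_eq_one hT1 hT2 hmv.2, pair_sum_eq_one hT1 hT2 hmv.1]
    omega

lemma exSet_shuffle1 (h12 : i₁ ≠ i₂)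
    (hT1 : ∀ j ∈ T₁, M i₁ j = true ∧ M i₂ j = false)
    (hT2 : ∀ j ∈ T₁, M i₁ (σ j) = false ∧ M i₂ (σ j) = true) :
    exSet (shuffleAt M i₁ i₂ T₁ σ ξ) i₁ i₂ = (exSet M i₁ i₂).image (cfun T₁ σ ξ) := by
  have hdisj := disj_of_ex hT1 hT2
  have hinv := cfun_invol (ξ := ξ) hdisj
  ext j
  rw [mem_image_invol hinv]
  simp only [exSet, Finset.mem_filter, Finset.mem_univ, true_and,
    shuffle_row1 hT1 hT2, shuffle_row2 h12 hT1 hT2]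

lemma exSet_shuffle2 (h12 : i₁ ≠ i₂)
    (hT1 : ∀ j ∈ T₁, M i₁ j = true ∧ M i₂ j = false)
    (hT2 : ∀ j ∈ T₁, M i₁ (σ j) = false ∧ M i₂ (σ j) = true) :
    exSet (shuffleAt M i₁ i₂ T₁ σ ξ) i₂ i₁ = (exSet M i₂ i₁).image (cfun T₁ σ ξ) := by
  have hdisj := disj_of_ex hT1 hT2
  have hinv := cfun_invol (ξ := ξ) hdisj
  ext j
  rw [mem_image_invol hinv]
  simp only [exSet, Finset.mem_filter, Finset.mem_univ, true_and,
    shuffle_row1 hT1 hT2, shuffle_row2 h12 hT1 hT2]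

lemma image_sdiff_fix {Fix B : Finset (Fin n)}
    (hfix : ∀ j ∈ T₁ ∪ T₁.image σ, j ∉ Fix) (hdisj : ∀ j ∈ T₁, σ j ∉ T₁) :
    (B.image (cfun T₁ σ ξ)) \ Fix = (B \ Fix).image (cfun T₁ σ ξ) := by
  have hinv := cfun_invol (ξ := ξ) hdisj
  ext j
  rw [Finset.mem_sdiff, mem_image_invol hinv, mem_image_invol hinv, Finset.mem_sdiff]
  by_cases hj : cfun T₁ σ ξ j = j
  · rw [hj]
  · have hmv := cfun_moves hdisj hj
    constructor
    · rintro ⟨h1, -⟩; exact ⟨h1, hfix _ hmv.2⟩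
    · rintro ⟨h1, -⟩; exact ⟨h1, hfix _ hmv.1⟩

end REG

section CONJ
variable {T : Finset (Fin n)} {σ : Equiv.Perm (Fin n)} {ξ : Fin n → Bool}

lemma cfun_imgmem_false {j : Fin n} (hj : j ∉ T) (hj2 : σ⁻¹ j ∈ T)
    (hξ : ξ (σ⁻¹ j) = false) : cfun T σ ξ j = σ⁻¹ j := by
  unfold cfun; rw [if_neg (by tauto), if_pos ⟨hj2, hξ⟩]

lemma cfun_imgmem_true {j : Fin n} (hj : j ∉ T)
    (hξ : ξ (σ⁻¹ j) = true) : cfun T σ ξ j = j := by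
  unfold cfun; rw [if_neg (by tauto), if_neg (by rw [hξ]; simp)]

lemma toPerm_mul_apply (c : Fin n → Fin n) (hc : Function.Involutive c)
    (σ : Equiv.Perm (Fin n)) (k : Fin n) :
    ((Function.Involutive.toPerm c hc) * σ * (Function.Involutive.toPerm c hc)) k
      = c (σ (c k)) := rfl

lemma toPerm_inv (c : Fin n → Fin n) (hc : Function.Involutive c) :
    (Function.Involutive.toPerm c hc)⁻¹ = Function.Involutive.toPerm c hc := by
  ext x; rfl

lemma toPerm_mul_inv_apply (c : Fin n → Fin n) (hc : Function.Involutive c)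
    (σ : Equiv.Perm (Fin n)) (k : Fin n) :
    ((Function.Involutive.toPerm c hc) * σ * (Function.Involutive.toPerm c hc))⁻¹ k
      = c (σ⁻¹ (c k)) := by
  rw [mul_inv_rev, mul_inv_rev, toPerm_inv]
  rfl

lemma cfun_conj (hdisj : ∀ j ∈ T, σ j ∉ T)
    (hinv : Function.Involutive (cfun T σ ξ)) :
    cfun (T.image (cfun T σ ξ))
      ((Function.Involutive.toPerm (cfun T σ ξ) hinv) * σ *
        (Function.Involutive.toPerm (cfun T σ ξ) hinv))
      (ξ ∘ cfun T σ ξ)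
    = cfun T σ ξ := by
  set cp := Function.Involutive.toPerm (cfun T σ ξ) hinv with hcp
  have hcpk : ∀ k, cp k = cfun T σ ξ k := fun _ => rfl
  have hmem' : ∀ k, k ∈ T.image (cfun T σ ξ) ↔ cfun T σ ξ k ∈ T :=
    fun k => mem_image_invol hinv
  have hσ'inv : ∀ k, (cp * σ * cp)⁻¹ k = cfun T σ ξ (σ⁻¹ (cfun T σ ξ k)) :=
    toPerm_mul_inv_apply _ hinv σ
  have hσ' : ∀ k, (cp * σ * cp) k = cfun T σ ξ (σ (cfun T σ ξ k)) :=
    toPerm_mul_apply _ hinv σ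
  have hdisj' : ∀ j ∈ T.image (cfun T σ ξ), (cp * σ * cp) j ∉ T.image (cfun T σ ξ) := by
    intro j hj hmem
    rw [hmem'] at hj hmem
    rw [hσ', hinv] at hmem
    exact hdisj _ hj hmem
  funext k
  by_cases hj : k ∈ T
  · cases hξ : ξ k
    · -- k ∈ T, ξ k = false : c k = σ k
      have hck := cfun_mem_false (σ := σ) hj hξ
      have h1 : k ∉ T.image (cfun T σ ξ) := by
        rw [hmem', hck]; exact hdisj _ hj
      have h2 : (cp * σ * cp)⁻¹ k = σ k := by
        rw [hσ'inv, hck]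
        simp only [Equiv.Perm.inv_def, Equiv.symm_apply_apply]
        exact hck
      have h3 : (cp * σ * cp)⁻¹ k ∈ T.image (cfun T σ ξ) := by
        rw [h2, hmem', cfun_img_false hdisj hj hξ]; exact hj
      have h4 : (ξ ∘ cfun T σ ξ) ((cp * σ * cp)⁻¹ k) = false := by
        show ξ (cfun T σ ξ _) = false
        rw [h2, cfun_img_false hdisj hj hξ, hξ]
      rw [cfun_imgmem_false h1 h3 h4, h2, hck]
    · -- k ∈ T, ξ k = true : c k = k
      have hck := cfun_mem_true hdisj hj hξ
      have h1 : k ∈ T.image (cfun T σ ξ) := by rw [hmem', hck]; exact hj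
      have h2 : (ξ ∘ cfun T σ ξ) k = true := by show ξ _ = true; rw [hck, hξ]
      rw [cfun_mem_true hdisj' h1 h2, hck]
  · by_cases hj2 : σ⁻¹ k ∈ T
    · cases hξ2 : ξ (σ⁻¹ k)
      · -- c k = σ⁻¹ k
        have hck := cfun_imgmem_false (ξ := ξ) hj hj2 hξ2
        have h1 : k ∈ T.image (cfun T σ ξ) := by rw [hmem', hck]; exact hj2
        have h2 : (ξ ∘ cfun T σ ξ) k = false := by show ξ _ = false; rw [hck, hξ2]
        rw [cfun_mem_false h1 h2, hσ', hck]
        simp only [Equiv.Perm.inv_def, Equiv.apply_symm_apply]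
        exact hck
      · -- c k = k
        have hck := cfun_imgmem_true (ξ := ξ) hj hξ2
        have hcs := cfun_mem_true hdisj hj2 hξ2
        have h1 : k ∉ T.image (cfun T σ ξ) := by rw [hmem', hck]; exact hj
        have h2 : (ξ ∘ cfun T σ ξ) ((cp * σ * cp)⁻¹ k) = true := by
          show ξ (cfun T σ ξ _) = true
          rw [hσ'inv, hck, hcs, hcs, hξ2]
        rw [cfun_imgmem_true h1 h2, hck]
    · have hck := cfun_not_mem (ξ := ξ) hj hj2
      have h1 : k ∉ T.image (cfun T σ ξ) := by rw [hmem', hck]; exact hj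
      by_cases hm : σ⁻¹ (σ⁻¹ k) ∈ T ∧ ξ (σ⁻¹ (σ⁻¹ k)) = false
      · have hcs : cfun T σ ξ (σ⁻¹ k) = σ⁻¹ (σ⁻¹ k) := by
          unfold cfun; rw [if_neg (by tauto), if_pos hm]
        have h3 : (cp * σ * cp)⁻¹ k ∉ T.image (cfun T σ ξ) := by
          rw [hσ'inv, hck, hcs, hmem', cfun_mem_false hm.1 hm.2]
          simp only [Equiv.Perm.inv_def, Equiv.apply_symm_apply]
          exact hj2
        rw [cfun_not_mem h1 h3, hck]
      · have hcs : cfun T σ ξ (σ⁻¹ k) = σ⁻¹ k := by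
          unfold cfun; rw [if_neg (by tauto), if_neg hm]
        have h3 : (cp * σ * cp)⁻¹ k ∉ T.image (cfun T σ ξ) := by
          rw [hσ'inv, hck, hcs, hmem', hcs]
          exact hj2
        rw [cfun_not_mem h1 h3, hck]

end CONJ

abbrev Tup (n : ℕ) := Matrix (Fin n) (Fin n) Bool × Finset (Fin n) × Finset (Fin n) ×
  Equiv.Perm (Fin n) × (Fin n → Bool)

section MAIN
variable {d : ℕ} {i₁ i₂ : Fin n} {F : Matrix (Fin n) (Fin n) Bool → Finset (Fin n)} {s : ℕ}
variable {M : Matrix (Fin n) (Fin n) Bool} {T₁ T₂ : Finset (Fin n)}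
variable {σ : Equiv.Perm (Fin n)} {ξ : Fin n → Bool}

lemma hT1_of (h1 : T₁ ⊆ exSet M i₁ i₂ \ F M) :
    ∀ j ∈ T₁, M i₁ j = true ∧ M i₂ j = false :=
  fun _ hj => (Finset.mem_filter.1 (Finset.mem_sdiff.1 (h1 hj)).1).2

lemma hT2_of (h2 : T₂ ⊆ exSet M i₂ i₁ \ F M) (hσ : T₁.image σ = T₂) :
    ∀ j ∈ T₁, M i₁ (σ j) = false ∧ M i₂ (σ j) = true := by
  intro j hj
  have hmem : σ j ∈ T₂ := hσ ▸ Finset.mem_image_of_mem σ hj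
  have h := (Finset.mem_filter.1 (Finset.mem_sdiff.1 (h2 hmem)).1).2
  exact ⟨h.2, h.1⟩

lemma hfix_of (h1 : T₁ ⊆ exSet M i₁ i₂ \ F M) (h2 : T₂ ⊆ exSet M i₂ i₁ \ F M)
    (hσ : T₁.image σ = T₂) : ∀ j ∈ T₁ ∪ T₁.image σ, j ∉ F M := by
  intro j hj
  rcases Finset.mem_union.1 hj with h | h
  · exact (Finset.mem_sdiff.1 (h1 h)).2
  · exact (Finset.mem_sdiff.1 (h2 (hσ ▸ h))).2

lemma FA_eq (hF : ∀ M M' : Matrix (Fin n) (Fin n) Bool,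
      (∀ i, i ≠ i₁ → i ≠ i₂ → M i = M' i) → F M = F M') :
    F (shuffleAt M i₁ i₂ T₁ σ ξ) = F M :=
  hF _ _ fun _ hi1 hi2 => shuffle_row_other hi1 hi2

lemma exdiff1 (h12 : i₁ ≠ i₂) (h1 : T₁ ⊆ exSet M i₁ i₂ \ F M)
    (h2 : T₂ ⊆ exSet M i₂ i₁ \ F M) (hσ : T₁.image σ = T₂)
    (hF : ∀ M M' : Matrix (Fin n) (Fin n) Bool,
      (∀ i, i ≠ i₁ → i ≠ i₂ → M i = M' i) → F M = F M') :
    exSet (shuffleAt M i₁ i₂ T₁ σ ξ) i₁ i₂ \ F (shuffleAt M i₁ i₂ T₁ σ ξ)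
      = (exSet M i₁ i₂ \ F M).image (cfun T₁ σ ξ) := by
  rw [FA_eq hF, exSet_shuffle1 h12 (hT1_of h1) (hT2_of h2 hσ),
    image_sdiff_fix (hfix_of h1 h2 hσ) (disj_of_ex (hT1_of h1) (hT2_of h2 hσ))]

lemma exdiff2 (h12 : i₁ ≠ i₂) (h1 : T₁ ⊆ exSet M i₁ i₂ \ F M)
    (h2 : T₂ ⊆ exSet M i₂ i₁ \ F M) (hσ : T₁.image σ = T₂)
    (hF : ∀ M M' : Matrix (Fin n) (Fin n) Bool,
      (∀ i, i ≠ i₁ → i ≠ i₂ → M i = M' i) → F M = F M') :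
    exSet (shuffleAt M i₁ i₂ T₁ σ ξ) i₂ i₁ \ F (shuffleAt M i₁ i₂ T₁ σ ξ)
      = (exSet M i₂ i₁ \ F M).image (cfun T₁ σ ξ) := by
  rw [FA_eq hF, exSet_shuffle2 h12 (hT1_of h1) (hT2_of h2 hσ),
    image_sdiff_fix (hfix_of h1 h2 hσ) (disj_of_ex (hT1_of h1) (hT2_of h2 hσ))]

lemma shuffle_inv (h12 : i₁ ≠ i₂) (h1 : T₁ ⊆ exSet M i₁ i₂ \ F M)
    (h2 : T₂ ⊆ exSet M i₂ i₁ \ F M) (hσ : T₁.image σ = T₂)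
    (hinv : Function.Involutive (cfun T₁ σ ξ)) :
    shuffleAt (shuffleAt M i₁ i₂ T₁ σ ξ) i₁ i₂ (T₁.image (cfun T₁ σ ξ))
      ((Function.Involutive.toPerm (cfun T₁ σ ξ) hinv) * σ *
        (Function.Involutive.toPerm (cfun T₁ σ ξ) hinv))
      (ξ ∘ cfun T₁ σ ξ) = M := by
  have hT1 := hT1_of h1
  have hT2 := hT2_of h2 hσ
  have hdisj := disj_of_ex hT1 hT2
  have hmem' : ∀ k, k ∈ T₁.image (cfun T₁ σ ξ) ↔ cfun T₁ σ ξ k ∈ T₁ :=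
    fun k => mem_image_invol hinv
  have hcc : ∀ x, cfun T₁ σ ξ
      (((Function.Involutive.toPerm (cfun T₁ σ ξ) hinv) * σ *
        (Function.Involutive.toPerm (cfun T₁ σ ξ) hinv)) x) = σ (cfun T₁ σ ξ x) :=
    fun x => hinv (σ (cfun T₁ σ ξ x))
  have hT1' : ∀ j ∈ T₁.image (cfun T₁ σ ξ),
      shuffleAt M i₁ i₂ T₁ σ ξ i₁ j = true ∧ shuffleAt M i₁ i₂ T₁ σ ξ i₂ j = false := by
    intro j hj
    rw [hmem'] at hj
    rw [shuffle_row1 hT1 hT2, shuffle_row2 h12 hT1 hT2]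
    exact hT1 _ hj
  have hT2' : ∀ j ∈ T₁.image (cfun T₁ σ ξ),
      shuffleAt M i₁ i₂ T₁ σ ξ i₁
        (((Function.Involutive.toPerm (cfun T₁ σ ξ) hinv) * σ *
          (Function.Involutive.toPerm (cfun T₁ σ ξ) hinv)) j) = false
      ∧ shuffleAt M i₁ i₂ T₁ σ ξ i₂
        (((Function.Involutive.toPerm (cfun T₁ σ ξ) hinv) * σ *
          (Function.Involutive.toPerm (cfun T₁ σ ξ) hinv)) j) = true := by
    intro j hj
    rw [hmem'] at hj
    rw [shuffle_row1 hT1 hT2, shuffle_row2 h12 hT1 hT2, hcc]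
    exact hT2 _ hj
  have hconj := cfun_conj (ξ := ξ) hdisj hinv
  funext i j
  by_cases e1 : i = i₁
  · subst e1
    rw [shuffle_row1 hT1' hT2', hconj, shuffle_row1 hT1 hT2, hinv j]
  · by_cases e2 : i = i₂
    · subst e2
      rw [shuffle_row2 h12 hT1' hT2', hconj, shuffle_row2 h12 hT1 hT2, hinv j]
    · rw [show shuffleAt (shuffleAt M i₁ i₂ T₁ σ ξ) i₁ i₂ (T₁.image (cfun T₁ σ ξ))
          ((Function.Involutive.toPerm (cfun T₁ σ ξ) hinv) * σ *
            (Function.Involutive.toPerm (cfun T₁ σ ξ) hinv)) (ξ ∘ cfun T₁ σ ξ) i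
          = shuffleAt M i₁ i₂ T₁ σ ξ i from shuffle_row_other e1 e2,
        show shuffleAt M i₁ i₂ T₁ σ ξ i = M i from shuffle_row_other e1 e2]

end MAIN

section PHI
variable {d : ℕ} {i₁ i₂ : Fin n} {F : Matrix (Fin n) (Fin n) Bool → Finset (Fin n)} {s : ℕ}

def GoodT (d : ℕ) (i₁ i₂ : Fin n) (F : Matrix (Fin n) (Fin n) Bool → Finset (Fin n))
    (s : ℕ) (t : Tup n) : Prop :=
  t.1 ∈ regSet n d ∧ t.2.1 ⊆ exSet t.1 i₁ i₂ \ F t.1 ∧ t.2.1.card = s ∧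
  t.2.2.1 ⊆ exSet t.1 i₂ i₁ \ F t.1 ∧ t.2.2.1.card = s ∧
  t.2.1.image t.2.2.2.1 = t.2.2.1

def PhiT (d : ℕ) (i₁ i₂ : Fin n) (F : Matrix (Fin n) (Fin n) Bool → Finset (Fin n))
    (s : ℕ) (t : Tup n) : Tup n :=
  if h : GoodT d i₁ i₂ F s t then
    (shuffleAt t.1 i₁ i₂ t.2.1 t.2.2.2.1 t.2.2.2.2,
     t.2.1.image (cfun t.2.1 t.2.2.2.1 t.2.2.2.2),
     t.2.2.1.image (cfun t.2.1 t.2.2.2.1 t.2.2.2.2),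
     Function.Involutive.toPerm (cfun t.2.1 t.2.2.2.1 t.2.2.2.2)
        (cfun_invol (ξ := t.2.2.2.2)
          (disj_of_ex (hT1_of h.2.1) (hT2_of h.2.2.2.1 h.2.2.2.2.2)))
       * t.2.2.2.1 *
     Function.Involutive.toPerm (cfun t.2.1 t.2.2.2.1 t.2.2.2.2)
        (cfun_invol (ξ := t.2.2.2.2)
          (disj_of_ex (hT1_of h.2.1) (hT2_of h.2.2.2.1 h.2.2.2.2.2))),
     t.2.2.2.2 ∘ cfun t.2.1 t.2.2.2.1 t.2.2.2.2)
  else t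

variable {M : Matrix (Fin n) (Fin n) Bool} {T₁ T₂ : Finset (Fin n)}
variable {σ : Equiv.Perm (Fin n)} {ξ : Fin n → Bool}

lemma phiT_of_good (h : GoodT d i₁ i₂ F s (M, T₁, T₂, σ, ξ))
    (hinv : Function.Involutive (cfun T₁ σ ξ)) :
    PhiT d i₁ i₂ F s (M, T₁, T₂, σ, ξ)
      = (shuffleAt M i₁ i₂ T₁ σ ξ, T₁.image (cfun T₁ σ ξ), T₂.image (cfun T₁ σ ξ),
         Function.Involutive.toPerm (cfun T₁ σ ξ) hinv * σ *
           Function.Involutive.toPerm (cfun T₁ σ ξ) hinv,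
         ξ ∘ cfun T₁ σ ξ) := by
  rw [PhiT, dif_pos h]

lemma phiT_of_bad (h : ¬ GoodT d i₁ i₂ F s (M, T₁, T₂, σ, ξ)) :
    PhiT d i₁ i₂ F s (M, T₁, T₂, σ, ξ) = (M, T₁, T₂, σ, ξ) := by
  rw [PhiT, dif_neg h]

lemma image_conj {τ : Equiv.Perm (Fin n)} (hinv : Function.Involutive (cfun T₁ σ ξ))
    (hτ : T₁.image τ = T₂) :
    (T₁.image (cfun T₁ σ ξ)).image
        ⇑(Function.Involutive.toPerm (cfun T₁ σ ξ) hinv * τ *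
          Function.Involutive.toPerm (cfun T₁ σ ξ) hinv)
      = T₂.image (cfun T₁ σ ξ) := by
  rw [Finset.image_image]
  have hfun : ⇑(Function.Involutive.toPerm (cfun T₁ σ ξ) hinv * τ *
      Function.Involutive.toPerm (cfun T₁ σ ξ) hinv) ∘ cfun T₁ σ ξ
      = cfun T₁ σ ξ ∘ ⇑τ := by
    funext k
    show cfun T₁ σ ξ (τ (cfun T₁ σ ξ (cfun T₁ σ ξ k))) = cfun T₁ σ ξ (τ k)
    rw [hinv k]
  rw [hfun, ← Finset.image_image, hτ]

lemma good_phi (h12 : i₁ ≠ i₂)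
    (hF : ∀ M M' : Matrix (Fin n) (Fin n) Bool,
      (∀ i, i ≠ i₁ → i ≠ i₂ → M i = M' i) → F M = F M')
    (h : GoodT d i₁ i₂ F s (M, T₁, T₂, σ, ξ))
    (hinv : Function.Involutive (cfun T₁ σ ξ)) :
    GoodT d i₁ i₂ F s
      (shuffleAt M i₁ i₂ T₁ σ ξ, T₁.image (cfun T₁ σ ξ), T₂.image (cfun T₁ σ ξ),
       Function.Involutive.toPerm (cfun T₁ σ ξ) hinv * σ *
         Function.Involutive.toPerm (cfun T₁ σ ξ) hinv,
       ξ ∘ cfun T₁ σ ξ) := by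
  obtain ⟨hM, h1, hc1, h2, hc2, hσ⟩ := h
  refine ⟨?_, ?_, ?_, ?_, ?_, ?_⟩
  · exact shuffle_mem_regSet h12 hM (hT1_of h1) (hT2_of h2 hσ)
  · show T₁.image (cfun T₁ σ ξ) ⊆ _
    rw [exdiff1 h12 h1 h2 hσ hF]
    exact Finset.image_subset_image h1
  · show (T₁.image (cfun T₁ σ ξ)).card = s
    rw [Finset.card_image_of_injective _ hinv.injective]
    exact hc1
  · show T₂.image (cfun T₁ σ ξ) ⊆ _
    rw [exdiff2 h12 h1 h2 hσ hF]
    exact Finset.image_subset_image h2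
  · show (T₂.image (cfun T₁ σ ξ)).card = s
    rw [Finset.card_image_of_injective _ hinv.injective]
    exact hc2
  · exact image_conj hinv hσ

lemma phi_invol (h12 : i₁ ≠ i₂)
    (hF : ∀ M M' : Matrix (Fin n) (Fin n) Bool,
      (∀ i, i ≠ i₁ → i ≠ i₂ → M i = M' i) → F M = F M') :
    Function.Involutive (PhiT (n := n) d i₁ i₂ F s) := by
  rintro ⟨M, T₁, T₂, σ, ξ⟩
  by_cases h : GoodT d i₁ i₂ F s (M, T₁, T₂, σ, ξ)
  · have hdisj := disj_of_ex (hT1_of h.2.1) (hT2_of h.2.2.2.1 h.2.2.2.2.2)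
    have hinv := cfun_invol (ξ := ξ) hdisj
    have hconj := cfun_conj (ξ := ξ) hdisj hinv
    rw [phiT_of_good h hinv]
    have h' := good_phi h12 hF h hinv
    have hinv' : Function.Involutive
        (cfun (T₁.image (cfun T₁ σ ξ))
          (Function.Involutive.toPerm (cfun T₁ σ ξ) hinv * σ *
            Function.Involutive.toPerm (cfun T₁ σ ξ) hinv) (ξ ∘ cfun T₁ σ ξ)) := by
      rw [hconj]; exact hinv
    rw [phiT_of_good h' hinv']
    have hTP : Function.Involutive.toPerm _ hinv' =
        Function.Involutive.toPerm (cfun T₁ σ ξ) hinv := by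
      apply Equiv.ext
      intro k
      show (cfun (T₁.image (cfun T₁ σ ξ)) _ (ξ ∘ cfun T₁ σ ξ)) k = cfun T₁ σ ξ k
      rw [hconj]
    have hccid : cfun T₁ σ ξ ∘ cfun T₁ σ ξ = id := funext hinv
    simp only [Prod.mk.injEq]
    refine ⟨?_, ?_, ?_, ?_, ?_⟩
    · exact shuffle_inv h12 h.2.1 h.2.2.2.1 h.2.2.2.2.2 hinv
    · rw [hconj, Finset.image_image, hccid, Finset.image_id]
    · rw [hconj, Finset.image_image, hccid, Finset.image_id]
    · rw [hTP]
      have hcp2 : Function.Involutive.toPerm (cfun T₁ σ ξ) hinv *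
          Function.Involutive.toPerm (cfun T₁ σ ξ) hinv = 1 := by
        apply Equiv.ext
        intro k
        exact hinv k
      calc Function.Involutive.toPerm (cfun T₁ σ ξ) hinv *
            (Function.Involutive.toPerm (cfun T₁ σ ξ) hinv * σ *
              Function.Involutive.toPerm (cfun T₁ σ ξ) hinv) *
            Function.Involutive.toPerm (cfun T₁ σ ξ) hinv
          = (Function.Involutive.toPerm (cfun T₁ σ ξ) hinv *
              Function.Involutive.toPerm (cfun T₁ σ ξ) hinv) * σ *
            (Function.Involutive.toPerm (cfun T₁ σ ξ) hinv *
              Function.Involutive.toPerm (cfun T₁ σ ξ) hinv) := by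
            group
        _ = σ := by rw [hcp2, one_mul, mul_one]
    · rw [hconj]
      funext k
      show ξ (cfun T₁ σ ξ (cfun T₁ σ ξ k)) = ξ k
      rw [hinv k]
  · rw [phiT_of_bad h, phiT_of_bad h]

end PHI

lemma expand5 {α β γ δ ε X : Type*} [Fintype α] [Fintype β] [Fintype γ] [Fintype δ] [Fintype ε]
    (p : PMF α) (q : α → PMF β) (r : α → PMF γ) (u : α → β → γ → PMF δ) (v : PMF ε)
    (res : α → β → γ → δ → ε → X) (A : X) :
    (p.bind fun a => (q a).bind fun b => (r a).bind fun c => (u a b c).bind fun d =>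
      v.map fun e => res a b c d e) A
    = ∑ t : α × β × γ × δ × ε,
        p t.1 * ((q t.1) t.2.1 * ((r t.1) t.2.2.1 * ((u t.1 t.2.1 t.2.2.1) t.2.2.2.1 *
          (if A = res t.1 t.2.1 t.2.2.1 t.2.2.2.1 t.2.2.2.2 then v t.2.2.2.2 else 0)))) := by
  simp only [PMF.bind_apply, PMF.map_apply, tsum_fintype, Finset.mul_sum, Fintype.sum_prod_type]

lemma uniformOn_apply_of_nonempty {α : Type*} {s : Finset α} (h : s.Nonempty) (a₀ x : α) :
    uniformOn s a₀ x = if x ∈ s then (s.card : ENNReal)⁻¹ else 0 := by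
  rw [uniformOn, dif_pos h, PMF.uniformOfFinset_apply]

lemma uniformOn_zero {α : Type*} {s : Finset α} (h : s.Nonempty) {x : α} (hx : x ∉ s) (a₀ : α) :
    uniformOn s a₀ x = 0 := by
  rw [uniformOn_apply_of_nonempty h, if_neg hx]

lemma filter_sub_card (B : Finset (Fin n)) (s : ℕ) :
    (Finset.univ.filter fun T : Finset (Fin n) => T ⊆ B ∧ T.card = s) = B.powersetCard s := by
  ext T
  simp [Finset.mem_powersetCard]

lemma perm_set_nonempty {T₁ T₂ : Finset (Fin n)} (hc : T₁.card = T₂.card) :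
    (Finset.univ.filter fun τ : Equiv.Perm (Fin n) => T₁.image τ = T₂).Nonempty := by
  classical
  have e0 : {x // x ∈ T₁} ≃ {x // x ∈ T₂} := Finset.equivOfCardEq hc
  refine ⟨Equiv.extendSubtype e0, ?_⟩
  rw [Finset.mem_filter]
  refine ⟨Finset.mem_univ _, ?_⟩
  apply Finset.eq_of_subset_of_card_le
  · intro x hx
    obtain ⟨y, hy, rfl⟩ := Finset.mem_image.1 hx
    exact Equiv.extendSubtype_mem e0 y hy
  · rw [Finset.card_image_of_injective _ (Equiv.injective _), hc]

lemma card_filterσ {T₁ T₂ : Finset (Fin n)} {σ : Equiv.Perm (Fin n)} {ξ : Fin n → Bool}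
    (hinv : Function.Involutive (cfun T₁ σ ξ)) :
    (Finset.univ.filter fun τ : Equiv.Perm (Fin n) =>
        (T₁.image (cfun T₁ σ ξ)).image τ = T₂.image (cfun T₁ σ ξ)).card
      = (Finset.univ.filter fun τ : Equiv.Perm (Fin n) => T₁.image τ = T₂).card := by
  set cp := Function.Involutive.toPerm (cfun T₁ σ ξ) hinv with hcp
  have hcp2 : cp * cp = 1 := by
    apply Equiv.ext
    intro k
    exact hinv k
  apply Finset.card_bij (fun τ _ => cp * τ * cp)
  · intro τ hτ
    rw [Finset.mem_filter] at hτ ⊢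
    refine ⟨Finset.mem_univ _, ?_⟩
    have hfn : ⇑(cp * τ * cp) = cfun T₁ σ ξ ∘ ⇑τ ∘ cfun T₁ σ ξ := rfl
    calc T₁.image ⇑(cp * τ * cp)
        = ((T₁.image (cfun T₁ σ ξ)).image ⇑τ).image (cfun T₁ σ ξ) := by
          rw [Finset.image_image, Finset.image_image, hfn]
          rfl
      _ = (T₂.image (cfun T₁ σ ξ)).image (cfun T₁ σ ξ) := by rw [hτ.2]
      _ = T₂ := by
          have hccid : cfun T₁ σ ξ ∘ cfun T₁ σ ξ = id := funext hinv
          rw [Finset.image_image, hccid, Finset.image_id]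
  · intro τ₁ _ τ₂ _ heq
    have h1 := congrArg (fun x => cp * x * cp) heq
    simpa [← mul_assoc, hcp2, mul_assoc, hcp2] using h1
  · intro τ hτ
    rw [Finset.mem_filter] at hτ
    refine ⟨cp * τ * cp, ?_, ?_⟩
    · rw [Finset.mem_filter]
      exact ⟨Finset.mem_univ _, image_conj hinv hτ.2⟩
    · calc cp * (cp * τ * cp) * cp = (cp * cp) * τ * (cp * cp) := by group
        _ = τ := by rw [hcp2, one_mul, mul_one]

/-- **Restricted shuffling.**  Let `M` be uniform on `M_{n,d}`, `i₁ ≠ i₂`, and let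
`Fix = F(M)` be a set of column indices depending only on the rows of `M` other than
`i₁, i₂`.  Put `A₁ = Ex_M(i₁,i₂) \ Fix`, `A₂ = Ex_M(i₂,i₁) \ Fix` and fix
`s ≤ min(|A₁|,|A₂|)`.  Conditionally on `M`, draw uniform `s`-subsets `T₁ ⊆ A₁`,
`T₂ ⊆ A₂` independently; conditionally on these, draw a uniform bijection
`π : T₁ → T₂` (encoded as a uniform permutation mapping `T₁` onto `T₂`); and let `ξ`
be iid uniform signs independent of everything.  Then the shuffled matrix `M̃` is again
uniform on `M_{n,d}`. -/
theorem restricted_shuffling (n d : ℕ) (hd : 1 ≤ d ∧ d ≤ n)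
    (i₁ i₂ : Fin n) (h12 : i₁ ≠ i₂) (hreg : (regSet n d).Nonempty)
    (F : Matrix (Fin n) (Fin n) Bool → Finset (Fin n))
    (hF : ∀ M M' : Matrix (Fin n) (Fin n) Bool,
      (∀ i, i ≠ i₁ → i ≠ i₂ → M i = M' i) → F M = F M')
    (s : ℕ)
    (hs : ∀ M ∈ regSet n d,
      s ≤ min ((exSet M i₁ i₂ \ F M).card) ((exSet M i₂ i₁ \ F M).card)) :
    ((PMF.uniformOfFinset (regSet n d) hreg).bind fun M =>
      (uniformOn (Finset.univ.filter fun T₁ : Finset (Fin n) =>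
          T₁ ⊆ exSet M i₁ i₂ \ F M ∧ T₁.card = s) ∅).bind fun T₁ =>
        (uniformOn (Finset.univ.filter fun T₂ : Finset (Fin n) =>
            T₂ ⊆ exSet M i₂ i₁ \ F M ∧ T₂.card = s) ∅).bind fun T₂ =>
          (uniformOn (Finset.univ.filter fun σ : Equiv.Perm (Fin n) =>
              T₁.image σ = T₂) (Equiv.refl (Fin n))).bind fun σ =>
            (PMF.uniformOfFintype (Fin n → Bool)).map fun ξ =>
              shuffleAt M i₁ i₂ T₁ σ ξ)
    = PMF.uniformOfFinset (regSet n d) hreg := by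
  classical
  apply PMF.ext
  intro A
  -- the right-hand side, written as the analogous chain returning `M`
  have hR : (PMF.uniformOfFinset (regSet n d) hreg) A
      = ((PMF.uniformOfFinset (regSet n d) hreg).bind fun M =>
        (uniformOn (Finset.univ.filter fun T₁ : Finset (Fin n) =>
            T₁ ⊆ exSet M i₁ i₂ \ F M ∧ T₁.card = s) ∅).bind fun T₁ =>
          (uniformOn (Finset.univ.filter fun T₂ : Finset (Fin n) =>
              T₂ ⊆ exSet M i₂ i₁ \ F M ∧ T₂.card = s) ∅).bind fun T₂ =>
            (uniformOn (Finset.univ.filter fun σ : Equiv.Perm (Fin n) =>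
                T₁.image σ = T₂) (Equiv.refl (Fin n))).bind fun σ =>
              (PMF.uniformOfFintype (Fin n → Bool)).map fun ξ => M) A := by
    have h5 : ∀ M : Matrix (Fin n) (Fin n) Bool,
        ((PMF.uniformOfFintype (Fin n → Bool)).map fun _ => M) = PMF.pure M := by
      intro M
      rw [PMF.map]
      exact PMF.bind_const _ _
    simp only [h5, PMF.bind_const, PMF.bind_pure]
  rw [hR]
  refine Eq.trans (expand5 _ _ _ _ _ _ A) (Eq.trans ?_ (expand5 _ _ _ _ _ _ A).symm)
  rw [← Function.Bijective.sum_comp ((phi_invol (d := d) (s := s) h12 hF).bijective)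
    (fun t : Tup n => (PMF.uniformOfFinset (regSet n d) hreg) t.1 *
      ((uniformOn (Finset.univ.filter fun T₁ : Finset (Fin n) =>
          T₁ ⊆ exSet t.1 i₁ i₂ \ F t.1 ∧ T₁.card = s) ∅) t.2.1 *
       ((uniformOn (Finset.univ.filter fun T₂ : Finset (Fin n) =>
          T₂ ⊆ exSet t.1 i₂ i₁ \ F t.1 ∧ T₂.card = s) ∅) t.2.2.1 *
        ((uniformOn (Finset.univ.filter fun σ : Equiv.Perm (Fin n) =>
            t.2.1.image σ = t.2.2.1) (Equiv.refl (Fin n))) t.2.2.2.1 *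
         (@ite _ (A = t.1) (Classical.propDecidable _)
            ((PMF.uniformOfFintype (Fin n → Bool)) t.2.2.2.2) 0)))))]
  refine Finset.sum_congr rfl fun t _ => ?_
  obtain ⟨M, T₁, T₂, σp, ξ⟩ := t
  dsimp only
  by_cases hg : GoodT d i₁ i₂ F s (M, T₁, T₂, σp, ξ)
  · -- good case
    have hdisj := disj_of_ex (hT1_of hg.2.1) (hT2_of hg.2.2.2.1 hg.2.2.2.2.2)
    have hinv := cfun_invol (ξ := ξ) hdisj
    rw [phiT_of_good hg hinv]
    dsimp only
    have h' := good_phi h12 hF hg hinv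
    -- cardinalities of the exceptional sets are preserved
    have cardEx1 : (exSet (shuffleAt M i₁ i₂ T₁ σp ξ) i₁ i₂ \ F (shuffleAt M i₁ i₂ T₁ σp ξ)).card
        = (exSet M i₁ i₂ \ F M).card := by
      rw [exdiff1 h12 hg.2.1 hg.2.2.2.1 hg.2.2.2.2.2 hF,
        Finset.card_image_of_injective _ hinv.injective]
    have cardEx2 : (exSet (shuffleAt M i₁ i₂ T₁ σp ξ) i₂ i₁ \ F (shuffleAt M i₁ i₂ T₁ σp ξ)).card
        = (exSet M i₂ i₁ \ F M).card := by
      rw [exdiff2 h12 hg.2.1 hg.2.2.2.1 hg.2.2.2.2.2 hF,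
        Finset.card_image_of_injective _ hinv.injective]
    have hsM := hs M hg.1
    have hsA := hs _ h'.1
    have ne1M : (Finset.univ.filter fun T : Finset (Fin n) =>
        T ⊆ exSet M i₁ i₂ \ F M ∧ T.card = s).Nonempty := by
      rw [filter_sub_card]
      exact Finset.powersetCard_nonempty.2 (le_trans hsM (min_le_left _ _))
    have ne2M : (Finset.univ.filter fun T : Finset (Fin n) =>
        T ⊆ exSet M i₂ i₁ \ F M ∧ T.card = s).Nonempty := by
      rw [filter_sub_card]
      exact Finset.powersetCard_nonempty.2 (le_trans hsM (min_le_right _ _))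
    have ne1A : (Finset.univ.filter fun T : Finset (Fin n) =>
        T ⊆ exSet (shuffleAt M i₁ i₂ T₁ σp ξ) i₁ i₂ \ F (shuffleAt M i₁ i₂ T₁ σp ξ)
          ∧ T.card = s).Nonempty := by
      rw [filter_sub_card]
      exact Finset.powersetCard_nonempty.2
        (cardEx1 ▸ le_trans hsM (min_le_left _ _))
    have ne2A : (Finset.univ.filter fun T : Finset (Fin n) =>
        T ⊆ exSet (shuffleAt M i₁ i₂ T₁ σp ξ) i₂ i₁ \ F (shuffleAt M i₁ i₂ T₁ σp ξ)
          ∧ T.card = s).Nonempty := by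
      rw [filter_sub_card]
      exact Finset.powersetCard_nonempty.2
        (cardEx2 ▸ le_trans hsM (min_le_right _ _))
    have f1 : (PMF.uniformOfFinset (regSet n d) hreg) (shuffleAt M i₁ i₂ T₁ σp ξ)
        = (PMF.uniformOfFinset (regSet n d) hreg) M := by
      rw [PMF.uniformOfFinset_apply, PMF.uniformOfFinset_apply, if_pos h'.1, if_pos hg.1]
    have f2 : (uniformOn (Finset.univ.filter fun T : Finset (Fin n) =>
          T ⊆ exSet (shuffleAt M i₁ i₂ T₁ σp ξ) i₁ i₂ \ F (shuffleAt M i₁ i₂ T₁ σp ξ)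
            ∧ T.card = s) ∅) (T₁.image (cfun T₁ σp ξ))
        = (uniformOn (Finset.univ.filter fun T : Finset (Fin n) =>
            T ⊆ exSet M i₁ i₂ \ F M ∧ T.card = s) ∅) T₁ := by
      have mA : T₁.image (cfun T₁ σp ξ) ∈ (Finset.univ.filter fun T : Finset (Fin n) =>
          T ⊆ exSet (shuffleAt M i₁ i₂ T₁ σp ξ) i₁ i₂ \ F (shuffleAt M i₁ i₂ T₁ σp ξ)
            ∧ T.card = s) :=
        Finset.mem_filter.2 ⟨Finset.mem_univ _, h'.2.1, h'.2.2.1⟩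
      have mM : T₁ ∈ (Finset.univ.filter fun T : Finset (Fin n) =>
          T ⊆ exSet M i₁ i₂ \ F M ∧ T.card = s) :=
        Finset.mem_filter.2 ⟨Finset.mem_univ _, hg.2.1, hg.2.2.1⟩
      rw [uniformOn_apply_of_nonempty ne1A, uniformOn_apply_of_nonempty ne1M,
        if_pos mA, if_pos mM,
        filter_sub_card, filter_sub_card, Finset.card_powersetCard,
        Finset.card_powersetCard, cardEx1]
    have f3 : (uniformOn (Finset.univ.filter fun T : Finset (Fin n) =>
          T ⊆ exSet (shuffleAt M i₁ i₂ T₁ σp ξ) i₂ i₁ \ F (shuffleAt M i₁ i₂ T₁ σp ξ)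
            ∧ T.card = s) ∅) (T₂.image (cfun T₁ σp ξ))
        = (uniformOn (Finset.univ.filter fun T : Finset (Fin n) =>
            T ⊆ exSet M i₂ i₁ \ F M ∧ T.card = s) ∅) T₂ := by
      have mA : T₂.image (cfun T₁ σp ξ) ∈ (Finset.univ.filter fun T : Finset (Fin n) =>
          T ⊆ exSet (shuffleAt M i₁ i₂ T₁ σp ξ) i₂ i₁ \ F (shuffleAt M i₁ i₂ T₁ σp ξ)
            ∧ T.card = s) :=
        Finset.mem_filter.2 ⟨Finset.mem_univ _, h'.2.2.2.1, h'.2.2.2.2.1⟩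
      have mM : T₂ ∈ (Finset.univ.filter fun T : Finset (Fin n) =>
          T ⊆ exSet M i₂ i₁ \ F M ∧ T.card = s) :=
        Finset.mem_filter.2 ⟨Finset.mem_univ _, hg.2.2.2.1, hg.2.2.2.2.1⟩
      rw [uniformOn_apply_of_nonempty ne2A, uniformOn_apply_of_nonempty ne2M,
        if_pos mA, if_pos mM,
        filter_sub_card, filter_sub_card, Finset.card_powersetCard,
        Finset.card_powersetCard, cardEx2]
    have neσM : (Finset.univ.filter fun τ : Equiv.Perm (Fin n) =>
        T₁.image τ = T₂).Nonempty :=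
      ⟨σp, Finset.mem_filter.2 ⟨Finset.mem_univ _, hg.2.2.2.2.2⟩⟩
    have neσA : (Finset.univ.filter fun τ : Equiv.Perm (Fin n) =>
        (T₁.image (cfun T₁ σp ξ)).image τ = T₂.image (cfun T₁ σp ξ)).Nonempty :=
      ⟨Function.Involutive.toPerm (cfun T₁ σp ξ) hinv * σp *
          Function.Involutive.toPerm (cfun T₁ σp ξ) hinv,
        Finset.mem_filter.2 ⟨Finset.mem_univ _, image_conj hinv hg.2.2.2.2.2⟩⟩
    have f4 : (uniformOn (Finset.univ.filter fun τ : Equiv.Perm (Fin n) =>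
          (T₁.image (cfun T₁ σp ξ)).image τ = T₂.image (cfun T₁ σp ξ)) (Equiv.refl (Fin n)))
          (Function.Involutive.toPerm (cfun T₁ σp ξ) hinv * σp *
            Function.Involutive.toPerm (cfun T₁ σp ξ) hinv)
        = (uniformOn (Finset.univ.filter fun τ : Equiv.Perm (Fin n) =>
            T₁.image τ = T₂) (Equiv.refl (Fin n))) σp := by
      have mA : Function.Involutive.toPerm (cfun T₁ σp ξ) hinv * σp *
            Function.Involutive.toPerm (cfun T₁ σp ξ) hinv
          ∈ (Finset.univ.filter fun τ : Equiv.Perm (Fin n) =>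
            (T₁.image (cfun T₁ σp ξ)).image τ = T₂.image (cfun T₁ σp ξ)) :=
        Finset.mem_filter.2 ⟨Finset.mem_univ _, image_conj hinv hg.2.2.2.2.2⟩
      have mM : σp ∈ (Finset.univ.filter fun τ : Equiv.Perm (Fin n) =>
          T₁.image τ = T₂) :=
        Finset.mem_filter.2 ⟨Finset.mem_univ _, hg.2.2.2.2.2⟩
      rw [uniformOn_apply_of_nonempty neσA, uniformOn_apply_of_nonempty neσM,
        if_pos mA, if_pos mM, card_filterσ hinv]
    have f5 : (PMF.uniformOfFintype (Fin n → Bool)) (ξ ∘ cfun T₁ σp ξ)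
        = (PMF.uniformOfFintype (Fin n → Bool)) ξ := by
      rw [PMF.uniformOfFintype_apply, PMF.uniformOfFintype_apply]
    rw [f1, f2, f3, f4, f5]
  · -- bad case : both sides vanish
    rw [phiT_of_bad hg]
    dsimp only
    have hz : ∀ x : ENNReal,
        (PMF.uniformOfFinset (regSet n d) hreg) M *
          ((uniformOn (Finset.univ.filter fun T : Finset (Fin n) =>
              T ⊆ exSet M i₁ i₂ \ F M ∧ T.card = s) ∅) T₁ *
           ((uniformOn (Finset.univ.filter fun T : Finset (Fin n) =>
              T ⊆ exSet M i₂ i₁ \ F M ∧ T.card = s) ∅) T₂ *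
            ((uniformOn (Finset.univ.filter fun τ : Equiv.Perm (Fin n) =>
                T₁.image τ = T₂) (Equiv.refl (Fin n))) σp * x))) = 0 := by
      intro x
      by_cases hM : M ∈ regSet n d
      · have hsM := hs M hM
        have ne1M : (Finset.univ.filter fun T : Finset (Fin n) =>
            T ⊆ exSet M i₁ i₂ \ F M ∧ T.card = s).Nonempty := by
          rw [filter_sub_card]
          exact Finset.powersetCard_nonempty.2 (le_trans hsM (min_le_left _ _))
        have ne2M : (Finset.univ.filter fun T : Finset (Fin n) =>
            T ⊆ exSet M i₂ i₁ \ F M ∧ T.card = s).Nonempty := by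
          rw [filter_sub_card]
          exact Finset.powersetCard_nonempty.2 (le_trans hsM (min_le_right _ _))
        by_cases m1 : T₁ ⊆ exSet M i₁ i₂ \ F M ∧ T₁.card = s
        · by_cases m2 : T₂ ⊆ exSet M i₂ i₁ \ F M ∧ T₂.card = s
          · by_cases mσ : T₁.image σp = T₂
            · exact absurd ⟨hM, m1.1, m1.2, m2.1, m2.2, mσ⟩ hg
            · have neσ : (Finset.univ.filter fun τ : Equiv.Perm (Fin n) =>
                  T₁.image τ = T₂).Nonempty :=
                perm_set_nonempty (m1.2.trans m2.2.symm)
              rw [uniformOn_zero neσ (fun hmem => mσ (Finset.mem_filter.1 hmem).2) _]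
              simp
          · rw [uniformOn_zero ne2M (fun hmem => m2 (Finset.mem_filter.1 hmem).2) _]
            simp
        · rw [uniformOn_zero ne1M (fun hmem => m1 (Finset.mem_filter.1 hmem).2) _]
          simp
      · rw [PMF.uniformOfFinset_apply, if_neg hM, zero_mul]
    rw [hz, hz]

end
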